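/- If two bipartite graphs G = (V1 ∪ V2, E) and G' = (V1' ∪ V2', E') with no isolated vertices are isomorphic (via an isomorphism respecting the bipartition sides), then the pedigrees P(G) and P(G') obtained from the reduction are isomorphic as pedigrees. -/

import Mathlib

/-- Vertices of the pedigree `P(G)` built from a bipartite graph `G`:
`founder u s` is `u^s`, `child u v s` is `(u,v)^s`, `grand u u' v` is
`(u,u',v)^f`. Gender `false` is female, `true` is male. -/
inductive RV (V1 V2 : Type*) : Type _
  | founder : V1 → Bool → RV V1 V2
  | child : V1 → V2 → Bool → RV V1 V2
  | grand : V1 → V1 → V2 → RV V1 V2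

variable {V1 V2 V1' V2' : Type*}

/-- The vertices that actually occur in `P(G)` for adjacency relation `A`. -/
def RValid (A : V1 → V2 → Prop) : RV V1 V2 → Prop
  | .founder u _ => ∃ v, A u v
  | .child u v _ => A u v
  | .grand u u' v => A u v ∧ A u' v

/-- The edges of `P(G)`: `u^s → (u,v)^{s'}` for each edge `(u,v)` and genders
`s, s'`, and `(u,v)^m → (u,u',v)^f`, `(u',v)^f → (u,u',v)^f`. -/
def REdge : RV V1 V2 → RV V1 V2 → Prop
  | .founder u _, .child w _ _ => u = w
  | .child u v s, .grand a b w => v = w ∧ ((s = true ∧ a = u) ∨ (s = false ∧ b = u))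
  | _, _ => False

/-- Genders in `P(G)`. -/
def RGender : RV V1 V2 → Bool
  | .founder _ s => s
  | .child _ _ s => s
  | .grand _ _ _ => false

/-- The vertex set of the pedigree `P(G)`. -/
def PV (A : V1 → V2 → Prop) : Type _ := {x : RV V1 V2 // RValid A x}


def RV.map (f : V1 → V1') (g : V2 → V2') : RV V1 V2 → RV V1' V2'
  | .founder u s => .founder (f u) s
  | .child u v s => .child (f u) (g v) s
  | .grand u u' v => .grand (f u) (f u') (g v)

def rvEquiv (α : V1 ≃ V1') (β : V2 ≃ V2') : RV V1 V2 ≃ RV V1' V2' where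
  toFun := RV.map α β
  invFun := RV.map α.symm β.symm
  left_inv x := by cases x <;> simp [RV.map]
  right_inv x := by cases x <;> simp [RV.map]

/-- if two bipartite graphs with no isolated vertices are
isomorphic (respecting sides), then the pedigrees `P(G)` and `P(G')` are
isomorphic as pedigrees (a bijection preserving edges and genders). -/
theorem reduction_forward [Fintype V1] [Fintype V2] [Fintype V1'] [Fintype V2']
    (A : V1 → V2 → Prop) (A' : V1' → V2' → Prop)
    (hno1 : ∀ u : V1, ∃ v, A u v) (hno2 : ∀ v : V2, ∃ u, A u v)
    (hno1' : ∀ u : V1', ∃ v, A' u v) (hno2' : ∀ v : V2', ∃ u, A' u v)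
    (α : V1 ≃ V1') (β : V2 ≃ V2') (hiso : ∀ u v, A u v ↔ A' (α u) (β v)) :
    ∃ φ : PV A ≃ PV A',
      (∀ a b : PV A, REdge a.val b.val ↔ REdge (φ a).val (φ b).val) ∧
      (∀ x : PV A, RGender x.val = RGender (φ x).val) := by
  have hvalid : ∀ x : RV V1 V2, RValid A x ↔ RValid A' (rvEquiv α β x) := by
    intro x
    cases x with
    | founder u s =>
        simp only [rvEquiv, RV.map, RValid, Equiv.coe_fn_mk]
        exact ⟨fun ⟨v, hv⟩ => ⟨β v, (hiso u v).mp hv⟩,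
          fun ⟨v, hv⟩ => ⟨β.symm v, (hiso u (β.symm v)).mpr (by simpa using hv)⟩⟩
    | child u v s => simpa [rvEquiv, RV.map, RValid] using hiso u v
    | grand u u' v =>
        simp [rvEquiv, RV.map, RValid, hiso u v, hiso u' v]
  refine ⟨(rvEquiv α β).subtypeEquiv hvalid, ?_, ?_⟩
  · rintro ⟨a, ha⟩ ⟨b, hb⟩
    show REdge a b ↔ REdge (rvEquiv α β a) (rvEquiv α β b)
    cases a <;> cases b <;>
      simp [rvEquiv, RV.map, REdge, Equiv.subtypeEquiv, α.injective.eq_iff, β.injective.eq_iff]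
  · rintro ⟨x, hx⟩
    show RGender x = RGender (rvEquiv α β x)
    cases x <;> simp [rvEquiv, RV.map, RGender, Equiv.subtypeEquiv]
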